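/- Let N ≥ 1 and (b_1,…,b_N) ∈ ℝ^N, and assume (λ_k)_{k=1}^N are eigenvalues of H_N with eigenvectors (φ^k)_{k=1}^N satisfying H_N φ^k = λ_k φ^k and φ^k_1 = 1, such that (φ^1,…,φ^N) is an orthogonal basis of ℝ^N, and set ρ_k := ⟨φ^k, φ^k⟩. Then for every control f : ℕ → ℝ, every 1 ≤ n ≤ N and every t ≥ 0, the solution of the finite system satisfies the Fourier expansion v^f_{n,t} = Σ_{k=1}^N c^k_t φ^k_n, where c^k_t = (1/ρ_k) Σ_{l=0}^{t} T_l(λ_k) f_{t−l}. -/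

import Mathlib

/-- `solFin N b f t n` is the solution `v^f_{n,t}` of the finite discrete Schrödinger system
with Dirichlet condition at `n = N+1`:
`v_{n,t+1} + v_{n,t-1} - v_{n+1,t} - v_{n-1,t} + b_n v_{n,t} = 0` for `1 ≤ n ≤ N`, `t ≥ 0`,
`v_{n,-1} = v_{n,0} = 0`, `v_{0,t} = f_t`, `v_{N+1,t} = 0`
(the first argument after `b f` is the time `t`, the last the space variable `n`). -/
noncomputable def solFin (N : ℕ) (b f : ℕ → ℝ) : ℕ → ℕ → ℝ
  | 0, n => if n = 0 then f 0 else 0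
  | 1, n => if n = 0 then f 1 else if n = N + 1 then 0 else
      solFin N b f 0 (n + 1) + solFin N b f 0 (n - 1) - b n * solFin N b f 0 n
  | (t + 2), n => if n = 0 then f (t + 2) else if n = N + 1 then 0 else
      solFin N b f (t + 1) (n + 1) + solFin N b f (t + 1) (n - 1) - b n * solFin N b f (t + 1) n
        - solFin N b f t n

/-- `cheb lam t` is the polynomial sequence `T_t(λ)` with `T_0 = 0`, `T_1 = 1`,
`T_{t+1}(λ) = λ T_t(λ) - T_{t-1}(λ)` (so `T_t(2x) = U_{t-1}(x)`, Chebyshev of the 2nd kind). -/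
noncomputable def cheb (lam : ℝ) : ℕ → ℝ
  | 0 => 0
  | 1 => 1
  | (t + 2) => lam * cheb lam (t + 1) - cheb lam t

/-- The `N × N` symmetric Jacobi matrix `H_N` with diagonal `-b_i` and off-diagonal `1`. -/
noncomputable def jacobiH (N : ℕ) (b : ℕ → ℝ) : Matrix (Fin N) (Fin N) ℝ :=
  Matrix.of fun i j =>
    if (i : ℕ) = (j : ℕ) then -b ((i : ℕ) + 1)
    else if (i : ℕ) + 1 = (j : ℕ) ∨ (j : ℕ) + 1 = (i : ℕ) then 1 else 0

noncomputable def extv (N : ℕ) (v : Fin N → ℝ) (m : ℕ) : ℝ :=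
  if h : 1 ≤ m ∧ m ≤ N then v ⟨m - 1, by omega⟩ else 0

lemma extv_of {N : ℕ} (v : Fin N → ℝ) (m : ℕ) (h1 : 1 ≤ m) (h2 : m ≤ N) :
    extv N v m = v ⟨m - 1, by omega⟩ := by
  rw [extv, dif_pos ⟨h1, h2⟩]

lemma extv_zero {N : ℕ} (v : Fin N → ℝ) : extv N v 0 = 0 := by
  rw [extv, dif_neg]; omega

lemma extv_top {N : ℕ} (v : Fin N → ℝ) : extv N v (N + 1) = 0 := by
  rw [extv, dif_neg]; omega

noncomputable def coef (lam rho : ℝ) (f : ℕ → ℝ) (t : ℕ) : ℝ :=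
  (1 / rho) * ∑ l ∈ Finset.range (t + 1), cheb lam l * f (t - l)

lemma coef_zero (lam rho : ℝ) (f : ℕ → ℝ) : coef lam rho f 0 = 0 := by
  simp [coef, cheb]

lemma coef_one (lam rho : ℝ) (f : ℕ → ℝ) : coef lam rho f 1 = (1 / rho) * f 0 := by
  simp [coef, Finset.sum_range_succ, cheb]

lemma coef_rec (lam rho : ℝ) (f : ℕ → ℝ) (t : ℕ) :
    coef lam rho f (t + 2) =
      lam * coef lam rho f (t + 1) - coef lam rho f t + (1 / rho) * f (t + 1) := by
  have hS2 : (∑ l ∈ Finset.range (t + 3), cheb lam l * f (t + 2 - l))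
      = ∑ i ∈ Finset.range (t + 2), cheb lam (i + 1) * f (t + 1 - i) := by
    rw [Finset.sum_range_succ']
    simp [cheb]
  have hS0 : (∑ l ∈ Finset.range (t + 1), cheb lam l * f (t - l))
      = ∑ i ∈ Finset.range (t + 2), cheb lam (i - 1) * f (t + 1 - i) := by
    symm
    rw [Finset.sum_range_succ']
    simp [cheb]
  have key : (∑ i ∈ Finset.range (t + 2), cheb lam (i + 1) * f (t + 1 - i))
      = lam * (∑ l ∈ Finset.range (t + 2), cheb lam l * f (t + 1 - l))
        - (∑ i ∈ Finset.range (t + 2), cheb lam (i - 1) * f (t + 1 - i)) + f (t + 1) := by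
    rw [Finset.mul_sum]
    rw [Finset.sum_range_succ' (fun i => cheb lam (i + 1) * f (t + 1 - i))]
    rw [Finset.sum_range_succ' (fun i => lam * (cheb lam i * f (t + 1 - i)))]
    rw [Finset.sum_range_succ' (fun i => cheb lam (i - 1) * f (t + 1 - i))]
    simp only [cheb, Nat.add_sub_cancel, Nat.succ_sub_succ, Nat.sub_zero, Nat.zero_sub, zero_mul, mul_zero,
      add_zero, one_mul]
    have : ∀ i ∈ Finset.range (t + 1),
        (lam * cheb lam (i + 1) - cheb lam i) * f (t - i)
          = lam * (cheb lam (i + 1) * f (t - i)) - cheb lam i * f (t - i) := by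
      intro i _; ring
    rw [Finset.sum_congr rfl this, Finset.sum_sub_distrib]
  show (1 / rho) * ∑ l ∈ Finset.range (t + 3), cheb lam l * f (t + 2 - l) = _
  rw [hS2, key, ← hS0]
  rw [coef, coef]
  ring

lemma jacobi_mulVec (N : ℕ) (b : ℕ → ℝ) (v : Fin N → ℝ) (i : Fin N) :
    (jacobiH N b).mulVec v i =
      extv N v ((i : ℕ) + 2) + extv N v (i : ℕ) - b ((i : ℕ) + 1) * v i := by
  have hsplit : ∀ j : Fin N,
      (if (i : ℕ) = (j : ℕ) then -b ((i : ℕ) + 1)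
        else if (i : ℕ) + 1 = (j : ℕ) ∨ (j : ℕ) + 1 = (i : ℕ) then 1 else 0) * v j
      = (if j = i then -b ((i : ℕ) + 1) * v j else 0)
        + (if (j : ℕ) = (i : ℕ) + 1 then v j else 0)
        + (if (j : ℕ) + 1 = (i : ℕ) then v j else 0) := by
    intro j
    split_ifs <;> simp_all [Fin.ext_iff] <;> omega
  rw [Matrix.mulVec, show (jacobiH N b) i = fun j : Fin N =>
    (if (i : ℕ) = (j : ℕ) then -b ((i : ℕ) + 1)
      else if (i : ℕ) + 1 = (j : ℕ) ∨ (j : ℕ) + 1 = (i : ℕ) then 1 else 0) from rfl]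
  rw [dotProduct, Finset.sum_congr rfl (fun j _ => hsplit j),
    Finset.sum_add_distrib, Finset.sum_add_distrib]
  have h1 : (∑ j : Fin N, if j = i then -b ((i : ℕ) + 1) * v j else 0)
      = -b ((i : ℕ) + 1) * v i := by
    rw [Finset.sum_ite_eq' Finset.univ i (fun j => -b ((i : ℕ) + 1) * v j)]
    simp
  have h2 : (∑ j : Fin N, if (j : ℕ) = (i : ℕ) + 1 then v j else 0)
      = extv N v ((i : ℕ) + 2) := by
    by_cases hi : (i : ℕ) + 1 < N
    · have : ∀ j : Fin N, ((j : ℕ) = (i : ℕ) + 1) ↔ j = ⟨(i : ℕ) + 1, hi⟩ := by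
        intro j; rw [Fin.ext_iff]
      simp only [this]
      rw [Finset.sum_ite_eq' Finset.univ _ (fun j => v j)]
      rw [extv_of v ((i : ℕ) + 2) (by omega) (by omega)]
      simp
    · rw [Finset.sum_eq_zero (fun j _ => by rw [if_neg]; omega)]
      rw [extv, dif_neg]; omega
  have h3 : (∑ j : Fin N, if (j : ℕ) + 1 = (i : ℕ) then v j else 0)
      = extv N v (i : ℕ) := by
    rcases Nat.eq_zero_or_pos (i : ℕ) with h0 | h0
    · rw [Finset.sum_eq_zero (fun j _ => by rw [if_neg]; omega)]
      rw [extv, dif_neg]; omega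
    · have hm : (i : ℕ) - 1 < N := by omega
      have : ∀ j : Fin N, ((j : ℕ) + 1 = (i : ℕ)) ↔ j = ⟨(i : ℕ) - 1, hm⟩ := by
        intro j; rw [Fin.ext_iff]; simp only [Fin.val_mk]; omega
      simp only [this]
      rw [Finset.sum_ite_eq' Finset.univ _ (fun j => v j)]
      rw [extv_of v (i : ℕ) h0 (by omega)]
      simp
  rw [h1, h2, h3]
  ring

lemma eig_rec {N : ℕ} {b : ℕ → ℝ} {lam : ℝ} {phi : Fin N → ℝ}
    (heig : (jacobiH N b).mulVec phi = lam • phi)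
    (m : ℕ) (h1 : 1 ≤ m) (h2 : m ≤ N) :
    lam * extv N phi m =
      extv N phi (m + 1) + extv N phi (m - 1) - b m * extv N phi m := by
  have hm : m - 1 < N := by omega
  have h := congrFun heig ⟨m - 1, hm⟩
  rw [jacobi_mulVec] at h
  simp only [Pi.smul_apply, smul_eq_mul, Fin.val_mk] at h
  have e1 : m - 1 + 2 = m + 1 := by omega
  have e2 : m - 1 + 1 = m := by omega
  rw [e1, e2] at h
  rw [extv_of phi m h1 h2]
  exact h.symm

open Matrix in
lemma delta_sum {N : ℕ} (hN : 1 ≤ N) (phi : Fin N → Fin N → ℝ) (rho : Fin N → ℝ)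
    (hfirst : ∀ k, phi k ⟨0, hN⟩ = 1)
    (horth : ∀ k l, k ≠ l → dotProduct (phi k) (phi l) = 0)
    (hrho : ∀ k, rho k = dotProduct (phi k) (phi k)) :
    ∀ n : Fin N, (∑ k, (1 / rho k) * phi k n) = if (n : ℕ) = 0 then 1 else 0 := by
  have hpos : ∀ k, (1 : ℝ) ≤ rho k := by
    intro k
    rw [hrho, dotProduct]
    have := Finset.single_le_sum (f := fun n => phi k n * phi k n)
      (fun n _ => mul_self_nonneg _) (Finset.mem_univ (⟨0, hN⟩ : Fin N))
    simpa [hfirst k] using this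
  have hne : ∀ k, rho k ≠ 0 := fun k => by have := hpos k; linarith
  set P : Matrix (Fin N) (Fin N) ℝ := Matrix.of (fun k n => phi k n) with hP
  have hPPT : P * Pᵀ = Matrix.diagonal rho := by
    ext k l
    by_cases hkl : k = l
    · subst hkl
      simp [Matrix.mul_apply, hP, Matrix.diagonal, hrho k, dotProduct]
    · simp [Matrix.mul_apply, hP, Matrix.diagonal, hkl, ← horth k l hkl, dotProduct]
  have hdet : IsUnit P.det := by
    have hd : P.det * P.det = ∏ k, rho k := by
      have : P.det * Pᵀ.det = (Matrix.diagonal rho).det := by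
        rw [← Matrix.det_mul, hPPT]
      rwa [Matrix.det_transpose, Matrix.det_diagonal] at this
    have hprod : (∏ k, rho k) ≠ 0 := Finset.prod_ne_zero_iff.mpr (fun k _ => hne k)
    rw [isUnit_iff_ne_zero]
    intro h0
    rw [h0, zero_mul] at hd
    exact hprod hd.symm
  set r : Fin N → ℝ := fun k => 1 / rho k with hr
  have h1 : P.mulVec (Pᵀ.mulVec r) = fun _ => 1 := by
    rw [Matrix.mulVec_mulVec, hPPT]
    funext k
    rw [Matrix.mulVec_diagonal, hr]
    rw [mul_one_div, div_self (hne k)]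
  have h2 : P.mulVec (Pi.single (⟨0, hN⟩ : Fin N) (1 : ℝ)) = fun _ => 1 := by
    funext k
    rw [Matrix.mulVec_single]
    simp [hP, hfirst k]
  have hu : Pᵀ.mulVec r = Pi.single (⟨0, hN⟩ : Fin N) (1 : ℝ) := by
    have h3 : (P⁻¹ * P).mulVec (Pᵀ.mulVec r)
        = (P⁻¹ * P).mulVec (Pi.single (⟨0, hN⟩ : Fin N) (1 : ℝ)) := by
      rw [← Matrix.mulVec_mulVec, ← Matrix.mulVec_mulVec, h1, h2]
    rwa [Matrix.nonsing_inv_mul P hdet, Matrix.one_mulVec, Matrix.one_mulVec] at h3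
  intro n
  have := congrFun hu n
  rw [Matrix.mulVec, dotProduct] at this
  simp only [Matrix.transpose_apply, hP, Matrix.of_apply, hr] at this
  rw [Pi.single_apply] at this
  have hcomm : (∑ k, (1 / rho k) * phi k n) = ∑ k, phi k n * (1 / rho k) := by
    exact Finset.sum_congr rfl (fun k _ => mul_comm _ _)
  rw [hcomm, this]
  have : (n = (⟨0, hN⟩ : Fin N)) ↔ ((n : ℕ) = 0) := by rw [Fin.ext_iff]
  simp [this]



lemma solFin_left (N : ℕ) (b f : ℕ → ℝ) (t : ℕ) : solFin N b f t 0 = f t := by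
  rcases t with _ | _ | t <;> simp [solFin]

lemma solFin_right (N : ℕ) (b f : ℕ → ℝ) (t : ℕ) : solFin N b f t (N + 1) = 0 := by
  rcases t with _ | _ | t <;> simp [solFin]

lemma main_aux (N : ℕ) (hN : 1 ≤ N) (b : ℕ → ℝ)
    (lam : Fin N → ℝ) (phi : Fin N → (Fin N → ℝ)) (rho : Fin N → ℝ)
    (heig : ∀ k, (jacobiH N b).mulVec (phi k) = lam k • phi k)
    (hdelta : ∀ n : Fin N, (∑ k, (1 / rho k) * phi k n) = if (n : ℕ) = 0 then 1 else 0)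
    (f : ℕ → ℝ) :
    ∀ t m, 1 ≤ m → m ≤ N →
      solFin N b f t m = ∑ k, coef (lam k) (rho k) f t * extv N (phi k) m := by
  have hdx : ∀ m, 1 ≤ m → m ≤ N →
      (∑ k, (1 / rho k) * extv N (phi k) m) = if m = 1 then 1 else 0 := by
    intro m h1 h2
    have he : ∀ k, extv N (phi k) m = phi k ⟨m - 1, by omega⟩ :=
      fun k => extv_of _ m h1 h2
    simp only [he]
    rw [hdelta ⟨m - 1, by omega⟩]
    by_cases hm : m = 1 <;> simp [hm] <;> omega
  intro t
  induction t using Nat.twoStepInduction with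
  | zero =>
    intro m h1 h2
    rw [show solFin N b f 0 m = if m = 0 then f 0 else 0 from rfl, if_neg (by omega)]
    simp [coef_zero]
  | one =>
    intro m h1 h2
    rw [show solFin N b f 1 m = if m = 0 then f 1 else if m = N + 1 then 0 else
      solFin N b f 0 (m + 1) + solFin N b f 0 (m - 1) - b m * solFin N b f 0 m from rfl]
    rw [if_neg (show ¬(m = 0) by omega), if_neg (show ¬(m = N + 1) by omega)]
    rw [show solFin N b f 0 (m + 1) = if m + 1 = 0 then f 0 else 0 from rfl,
      if_neg (show ¬(m + 1 = 0) by omega)]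
    rw [show solFin N b f 0 (m - 1) = if m - 1 = 0 then f 0 else 0 from rfl]
    rw [show solFin N b f 0 m = if m = 0 then f 0 else 0 from rfl,
      if_neg (show ¬(m = 0) by omega)]
    have hc : ∀ k : Fin N, coef (lam k) (rho k) f 1 * extv N (phi k) m
        = f 0 * ((1 / rho k) * extv N (phi k) m) := by
      intro k; rw [coef_one]; ring
    rw [Finset.sum_congr rfl (fun k _ => hc k), ← Finset.mul_sum, hdx m h1 h2]
    have h10 : (m - 1 = 0) ↔ (m = 1) := by omega
    simp only [h10]
    by_cases hm : m = 1 <;> simp [hm]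
  | more t ih ih1 =>
    intro m h1 h2
    rw [show solFin N b f (t + 2) m = if m = 0 then f (t + 2) else if m = N + 1 then 0 else
      solFin N b f (t + 1) (m + 1) + solFin N b f (t + 1) (m - 1) - b m * solFin N b f (t + 1) m
        - solFin N b f t m from rfl]
    rw [if_neg (show ¬(m = 0) by omega), if_neg (show ¬(m = N + 1) by omega)]
    -- the four pieces
    have hA : solFin N b f (t + 1) (m + 1)
        = ∑ k, coef (lam k) (rho k) f (t + 1) * extv N (phi k) (m + 1) := by
      by_cases hm : m = N
      · subst hm
        rw [solFin_right]
        rw [Finset.sum_eq_zero]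
        intro k _
        rw [extv_top, mul_zero]
      · exact ih1 (m + 1) (by omega) (by omega)
    have hB : solFin N b f (t + 1) (m - 1)
        = (∑ k, coef (lam k) (rho k) f (t + 1) * extv N (phi k) (m - 1))
          + (if m = 1 then f (t + 1) else 0) := by
      by_cases hm : m = 1
      · subst hm
        rw [show (1 : ℕ) - 1 = 0 from rfl, if_pos rfl, solFin_left,
          Finset.sum_eq_zero (fun k _ => by rw [extv_zero, mul_zero]), zero_add]
      · rw [if_neg hm, add_zero]
        exact ih1 (m - 1) (by omega) (by omega)
    have hC := ih1 m h1 h2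
    have hD := ih m h1 h2
    rw [hA, hB, hC, hD]
    -- now the right-hand side
    have expand : ∀ k : Fin N, coef (lam k) (rho k) f (t + 2) * extv N (phi k) m
        = coef (lam k) (rho k) f (t + 1) * extv N (phi k) (m + 1)
          + coef (lam k) (rho k) f (t + 1) * extv N (phi k) (m - 1)
          - b m * (coef (lam k) (rho k) f (t + 1) * extv N (phi k) m)
          - coef (lam k) (rho k) f t * extv N (phi k) m
          + f (t + 1) * ((1 / rho k) * extv N (phi k) m) := by
      intro k
      have e1 : coef (lam k) (rho k) f (t + 2) * extv N (phi k) m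
          = coef (lam k) (rho k) f (t + 1) * (lam k * extv N (phi k) m)
            - coef (lam k) (rho k) f t * extv N (phi k) m
            + f (t + 1) * ((1 / rho k) * extv N (phi k) m) := by
        rw [coef_rec]; ring
      rw [e1, eig_rec (heig k) m h1 h2]
      ring
    rw [Finset.sum_congr rfl (fun k _ => expand k)]
    rw [Finset.sum_add_distrib, Finset.sum_sub_distrib, Finset.sum_sub_distrib,
      Finset.sum_add_distrib, ← Finset.mul_sum, ← Finset.mul_sum, hdx m h1 h2]
    by_cases hm : m = 1 <;> simp [hm] <;> ring

/-- Fourier expansion of the solution of the finite system in the eigenvectors of `H_N`. -/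
theorem fourier_expansion (N : ℕ) (hN : 1 ≤ N) (b : ℕ → ℝ)
    (lam : Fin N → ℝ) (phi : Fin N → (Fin N → ℝ))
    (heig : ∀ k, (jacobiH N b).mulVec (phi k) = lam k • phi k)
    (hfirst : ∀ k, phi k ⟨0, hN⟩ = 1)
    (horth : ∀ k l, k ≠ l → dotProduct (phi k) (phi l) = 0)
    (rho : Fin N → ℝ) (hrho : ∀ k, rho k = dotProduct (phi k) (phi k)) :
    ∀ f : ℕ → ℝ, ∀ n : Fin N, ∀ t : ℕ,
      solFin N b f t ((n : ℕ) + 1) =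
        ∑ k, ((1 / rho k) * ∑ l ∈ Finset.range (t + 1), cheb (lam k) l * f (t - l)) * phi k n := by
  intro f n t
  have hdelta := delta_sum hN phi rho hfirst horth hrho
  have hn : (n : ℕ) + 1 ≤ N := n.isLt
  have h := main_aux N hN b lam phi rho heig hdelta f t ((n : ℕ) + 1) (by omega) hn
  rw [h]
  refine Finset.sum_congr rfl (fun k _ => ?_)
  rw [extv_of _ _ (by omega) hn]
  rfl
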